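/- Let H, Q be linear operators on a complex vector space, m ≥ 1 an integer, and |S₀⟩ a vector such that H|S₀⟩ = E₀|S₀⟩, [H,Q]|S₀⟩ = ℰ Q|S₀⟩, the r-fold iterated commutator ad_Q^{r-1}([H,Q]) annihilates |S₀⟩ for 2 ≤ r ≤ m, and the (m+1)-fold iterated commutator ad_Q^{m}([H,Q]) = 0 as an operator. Then for every nonnegative integer n, H Qⁿ|S₀⟩ = (E₀ + nℰ) Qⁿ|S₀⟩. -/

import Mathlib

/-- RSGA-m: `H S₀ = E₀ • S₀`, `[H,Q] S₀ = ℰ • Q S₀`, the `r`-fold iterated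
commutator `[[…[H,Q],Q],…,Q]` (with `r` occurrences of `Q`) annihilates `S₀`
for `2 ≤ r ≤ m`, and the `(m+1)`-fold iterated commutator vanishes as an
operator.  Then `H (Qⁿ S₀) = (E₀ + n ℰ) • Qⁿ S₀` for all `n ≥ 0`. -/
theorem rsga_m_tower {V : Type*} [AddCommGroup V] [Module ℂ V]
    (H Q : Module.End ℂ V) (E₀ ℰ : ℂ) (S₀ : V) (m : ℕ) (hm : 1 ≤ m)
    (h1 : H S₀ = E₀ • S₀)
    (h2 : ⁅H, Q⁆ S₀ = ℰ • (Q S₀))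
    (h3 : ∀ r : ℕ, 2 ≤ r → r ≤ m →
      (((fun X => ⁅X, Q⁆)^[r - 1]) ⁅H, Q⁆) S₀ = 0)
    (h4 : ((fun X => ⁅X, Q⁆)^[m]) ⁅H, Q⁆ = 0) :
    ∀ n : ℕ, H ((Q ^ n) S₀) = (E₀ + (n : ℂ) * ℰ) • ((Q ^ n) S₀) := by
  set D : ℕ → Module.End ℂ V := fun k => (fun X => ⁅X, Q⁆)^[k] ⁅H, Q⁆ with hD
  have hsucc : ∀ k, D (k + 1) = ⁅D k, Q⁆ := by
    intro k
    simp only [hD, Function.iterate_succ_apply']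
  have hstep : ∀ k (x : V), D k (Q x) = Q (D k x) + D (k + 1) x := by
    intro k x
    rw [hsucc k]
    simp only [Ring.lie_def, LinearMap.sub_apply, Module.End.mul_apply]
    abel
  -- operators D j vanish for j ≥ m
  have hzero_op : ∀ j, m ≤ j → D j = 0 := by
    intro j hj
    induction j with
    | zero => omega
    | succ j ih =>
      rcases Nat.lt_or_ge j m with h | h
      · have hmj : m = j + 1 := by omega
        show (fun X => ⁅X, Q⁆)^[j + 1] ⁅H, Q⁆ = 0
        rw [← hmj]; exact h4
      · rw [hsucc j, ih h, Ring.lie_def, zero_mul, mul_zero, sub_self]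
  -- D j annihilates S₀ for j ≥ 1
  have hS : ∀ j, 1 ≤ j → D j S₀ = 0 := by
    intro j hj
    rcases Nat.lt_or_ge j m with h | h
    · have := h3 (j + 1) (by omega) (by omega)
      simpa using this
    · rw [hzero_op j h]; rfl
  -- D j annihilates Qⁿ S₀ for j ≥ 1
  have hann : ∀ n, ∀ j, 1 ≤ j → D j ((Q ^ n) S₀) = 0 := by
    intro n
    induction n with
    | zero => intro j hj; simpa using hS j hj
    | succ n ih =>
      intro j hj
      have hx : (Q ^ (n + 1)) S₀ = Q ((Q ^ n) S₀) := by
        rw [pow_succ']; rfl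
      rw [hx, hstep j, ih j hj, ih (j + 1) (by omega), map_zero, add_zero]
  -- D 0 shifts: D 0 (Qⁿ S₀) = ℰ • Qⁿ⁺¹ S₀
  have h0 : ∀ n, D 0 ((Q ^ n) S₀) = ℰ • ((Q ^ (n + 1)) S₀) := by
    intro n
    induction n with
    | zero =>
      have hd : D 0 = ⁅H, Q⁆ := rfl
      rw [hd]
      simpa using h2
    | succ n ih =>
      have hx : (Q ^ (n + 1)) S₀ = Q ((Q ^ n) S₀) := by
        rw [pow_succ']; rfl
      have hx2 : (Q ^ (n + 1 + 1)) S₀ = Q ((Q ^ (n + 1)) S₀) := by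
        rw [pow_succ']; rfl
      rw [hx, hstep 0, ih, hann n 1 le_rfl, add_zero, map_smul, ← hx2]
  -- main induction
  intro n
  induction n with
  | zero => simpa using h1
  | succ n ih =>
    have hx : (Q ^ (n + 1)) S₀ = Q ((Q ^ n) S₀) := by
      rw [pow_succ']; rfl
    have hHQ : ∀ x : V, H (Q x) = Q (H x) + D 0 x := by
      intro x
      have : D 0 = ⁅H, Q⁆ := rfl
      rw [this]
      simp only [Ring.lie_def, LinearMap.sub_apply, Module.End.mul_apply]
      abel
    rw [hx, hHQ, ih, map_smul, ← hx, h0 n, ← add_smul]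
    congr 1
    push_cast
    ring
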